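/- Let A : H₁ → H₂ be a bounded linear operator with ‖A‖ > 0 and let T : H₂ → H₂ be α-strongly quasi-nonexpansive (α ≥ 0) with (im A) ∩ Fix T ≠ ∅. Then the Landweber-type operator V := Id + ‖A‖⁻² A*(T − Id)A is α-strongly quasi-nonexpansive. -/

import Mathlib

open scoped RealInnerProductSpace

theorem stmt_9 {H₁ H₂ : Type*} [NormedAddCommGroup H₁] [InnerProductSpace ℝ H₁]
    [CompleteSpace H₁] [NormedAddCommGroup H₂] [InnerProductSpace ℝ H₂] [CompleteSpace H₂]
    (A : H₁ →L[ℝ] H₂) (hA : ‖A‖ > 0)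
    (T : H₂ → H₂) (α : ℝ) (hα : α ≥ 0)
    (hfix : ∃ z : H₂, T z = z)
    (hT : ∀ (u z : H₂), T z = z → ‖T u - z‖ ^ 2 ≤ ‖u - z‖ ^ 2 - α * ‖T u - u‖ ^ 2)
    (him : ∃ w : H₁, T (A w) = A w)
    (V : H₁ → H₁)
    (hV : ∀ x : H₁, V x = x + (‖A‖ ^ 2)⁻¹ • (ContinuousLinearMap.adjoint A) (T (A x) - A x)) :
    ∀ (x z : H₁), T (A z) = A z → ‖V x - z‖ ^ 2 ≤ ‖x - z‖ ^ 2 - α * ‖V x - x‖ ^ 2 := by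
  intro x z hz
  set c : ℝ := (‖A‖ ^ 2)⁻¹ with hc
  have hcpos : 0 < c := by positivity
  have hcA : c * ‖A‖ ^ 2 = 1 := by
    rw [hc]; field_simp
  set e : H₂ := T (A x) - A x with he
  set w : H₁ := (ContinuousLinearMap.adjoint A) e with hw
  have hinner : 2 * ⟪A x - A z, e⟫ ≤ -(1 + α) * ‖e‖ ^ 2 := by
    have h := hT (A x) (A z) hz
    have hrw : T (A x) - A z = (A x - A z) + e := by rw [he]; abel
    rw [hrw, norm_add_sq_real] at h
    nlinarith [h]
  have hAe : ‖w‖ ^ 2 ≤ ‖A‖ ^ 2 * ‖e‖ ^ 2 := by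
    have h1 : ‖w‖ ≤ ‖A‖ * ‖e‖ := by
      calc ‖w‖ ≤ ‖ContinuousLinearMap.adjoint A‖ * ‖e‖ :=
            (ContinuousLinearMap.adjoint A).le_opNorm e
        _ = ‖A‖ * ‖e‖ := by
            rw [LinearIsometryEquiv.norm_map ContinuousLinearMap.adjoint A]
    nlinarith [norm_nonneg w, norm_nonneg e, norm_nonneg A]
  have hip : ⟪x - z, w⟫ = ⟪A x - A z, e⟫ := by
    rw [hw, ContinuousLinearMap.adjoint_inner_right, map_sub]
  have hVxz : ‖V x - z‖ ^ 2 = ‖x - z‖ ^ 2 + 2 * (c * ⟪A x - A z, e⟫) + c ^ 2 * ‖w‖ ^ 2 := by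
    have hr : V x - z = (x - z) + c • w := by rw [hV x]; abel
    rw [hr, norm_add_sq_real, real_inner_smul_right, hip, norm_smul, mul_pow]
    simp [abs_of_pos hcpos]
  have hVxx : ‖V x - x‖ ^ 2 = c ^ 2 * ‖w‖ ^ 2 := by
    have hr : V x - x = c • w := by rw [hV x]; abel
    rw [hr, norm_smul, mul_pow]
    simp [abs_of_pos hcpos]
  have h2 : c ^ 2 * ‖A‖ ^ 2 = c := by
    rw [hc]; field_simp
  have hkey : c ^ 2 * ‖w‖ ^ 2 ≤ c * ‖e‖ ^ 2 := by
    calc c ^ 2 * ‖w‖ ^ 2 ≤ c ^ 2 * (‖A‖ ^ 2 * ‖e‖ ^ 2) := by nlinarith [sq_nonneg c]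
      _ = c * ‖e‖ ^ 2 := by rw [← mul_assoc, h2]
  nlinarith [hVxz, hVxx, hkey, hinner, mul_le_mul_of_nonneg_left hkey hα, hcpos]
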